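/- arXiv:1106.3979 — 7 statements merged into one kernel-verified Lean document; each statement's English description precedes it below -/
import Mathlib

section
/- Let ω be a binary sequence containing infinitely many 0's and infinitely many 1's, and let t be any integer. Then the set I_t = {n ≥ 1 : 1 − 2^{n-1} ≤ −a_n^ω + t ≤ 2^{n-1}} is nonempty. -/
def aseq (x : ℕ → ℤ) (n : ℕ) : ℤ :=
  (∑ i ∈ Finset.range n, x (i + 1) * 2 ^ i) - 2 ^ (n - 1)

theorem stmt7 (x : ℕ → ℤ) (hx : ∀ i, x i = 0 ∨ x i = 1)
    (h0 : {i : ℕ | x i = 0}.Infinite) (h1 : {i : ℕ | x i = 1}.Infinite) (t : ℤ) :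
    ∃ n : ℕ, 1 ≤ n ∧ 1 - 2 ^ (n - 1) ≤ -aseq x n + t ∧ -aseq x n + t ≤ 2 ^ (n - 1) := by
  set S : ℕ → ℤ := fun n => ∑ i ∈ Finset.range n, x (i + 1) * 2 ^ i with hSdef
  have hnn : ∀ i, 0 ≤ x i := fun i => by rcases hx i with h | h <;> simp [h]
  have hle1 : ∀ i, x i ≤ 1 := fun i => by rcases hx i with h | h <;> simp [h]
  have hmono : ∀ a b, a ≤ b → S a ≤ S b := by
    intro a b hab
    apply Finset.sum_le_sum_of_subset_of_nonneg (Finset.range_subset_range.2 hab)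
    intro i _ _
    exact mul_nonneg (hnn _) (by positivity)
  have hgeom : ∀ n : ℕ, ∑ i ∈ Finset.range n, (2:ℤ) ^ i = 2 ^ n - 1 := by
    intro n
    induction n with
    | zero => simp
    | succ k ih => rw [Finset.sum_range_succ, ih]; ring
  have hub : ∀ n, S n ≤ 2 ^ n - 1 := by
    intro n
    calc S n ≤ ∑ i ∈ Finset.range n, (2:ℤ) ^ i := by
          apply Finset.sum_le_sum
          intro i _
          have := hle1 (i + 1)
          nlinarith [pow_pos (by norm_num : (0:ℤ) < 2) i]
      _ = 2 ^ n - 1 := hgeom n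
  have h2big : ∀ s : ℤ, s ≤ 2 ^ s.toNat := by
    intro s
    rcases le_or_gt s 0 with h | h
    · exact h.trans (by positivity)
    · have h2 := Nat.lt_two_pow_self (n := s.toNat)
      calc s = (s.toNat : ℤ) := (Int.toNat_of_nonneg h.le).symm
        _ ≤ 2 ^ s.toNat := by exact_mod_cast h2.le
  -- find j with x j = 1, j > t.toNat
  obtain ⟨j, hj1, hjgt⟩ := h1.exists_gt t.toNat
  have hj1' : x j = 1 := hj1
  have hjpos : 1 ≤ j := Nat.one_le_iff_ne_zero.mpr (by omega)
  have hSj : 2 ^ (j - 1) ≤ S j := by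
    have hmem : j - 1 ∈ Finset.range j := Finset.mem_range.2 (by omega)
    have := Finset.single_le_sum (f := fun i => x (i + 1) * 2 ^ i)
      (fun i _ => mul_nonneg (hnn _) (by positivity)) hmem
    have hidx : j - 1 + 1 = j := by omega
    rw [hidx, hj1', one_mul] at this
    exact this
  have htS : ∀ n, j ≤ n → t ≤ S n := by
    intro n hn
    calc t ≤ 2 ^ t.toNat := h2big t
      _ ≤ 2 ^ (j - 1) := pow_le_pow_right₀ (by norm_num) (by omega)
      _ ≤ S j := hSj
      _ ≤ S n := hmono _ _ hn
  -- find m' with x m' = 0, m' > max j (-t).toNat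
  obtain ⟨m', hm0, hmgt⟩ := h0.exists_gt (max j (-t).toNat)
  have hm0' : x m' = 0 := hm0
  have hm'pos : 1 ≤ m' := by
    have := le_max_left j ((-t).toNat); omega
  set m := m' - 1 with hm
  have hm'eq : m' = m + 1 := by omega
  have hSm' : S m' = S m := by
    rw [hm'eq]
    show (∑ i ∈ Finset.range (m + 1), x (i + 1) * 2 ^ i) = S m
    rw [Finset.sum_range_succ]
    have : m + 1 = m' := hm'eq.symm
    rw [this, hm0']
    simp [hSdef]
  have hjm : j ≤ m' := le_of_lt (lt_of_le_of_lt (le_max_left _ _) hmgt)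
  have htle : t ≤ S m' := htS m' hjm
  have hneg : -t ≤ 2 ^ m := by
    calc -t ≤ 2 ^ (-t).toNat := h2big (-t)
      _ ≤ 2 ^ m := pow_le_pow_right₀ (by norm_num) (by
          have := le_max_right j ((-t).toNat); omega)
  have hSmub : S m ≤ 2 ^ m - 1 := hub m
  refine ⟨m', hm'pos, ?_, ?_⟩
  · show 1 - 2 ^ (m' - 1) ≤ -aseq x m' + t
    have : aseq x m' = S m' - 2 ^ (m' - 1) := rfl
    rw [this]
    have hm1 : m' - 1 = m := rfl
    rw [hm1]
    have hp : (2:ℤ) ^ (m + 1) = 2 * 2 ^ m := by ring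
    rw [hSm']
    linarith
  · show -aseq x m' + t ≤ 2 ^ (m' - 1)
    have : aseq x m' = S m' - 2 ^ (m' - 1) := rfl
    rw [this]
    linarith
end

section
/- Let ω = (x_i) and ω' = (y_i) be binary sequences and t ∈ ℤ. If there exists n₀ such that −a_n^{ω'} = −a_n^ω + t for all n ≥ n₀, then x_n = y_n for all n > n₀; in particular ω and ω' are cofinal. -/
theorem stmt8 (x y : ℕ → ℤ) (hx : ∀ i, x i = 0 ∨ x i = 1) (hy : ∀ i, y i = 0 ∨ y i = 1)
    (t : ℤ) (n₀ : ℕ) (h : ∀ n, n₀ ≤ n → -aseq y n = -aseq x n + t) :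
    ∀ n, n₀ < n → x n = y n := by
  intro n hn
  obtain ⟨m, rfl⟩ : ∃ m, n = m + 1 := ⟨n - 1, by omega⟩
  have h1 := h (m + 1) (by omega)
  have h2 := h m (by omega)
  have key : aseq x (m + 1) - aseq x m = aseq y (m + 1) - aseq y m := by linarith
  simp only [aseq, Finset.sum_range_succ, Nat.add_sub_cancel] at key
  have : x (m + 1) * 2 ^ m = y (m + 1) * 2 ^ m := by linarith
  exact mul_right_cancel₀ (by positivity) this
end

section
/- Let ω, ω' be binary sequences differing only at index n, and define Φ_n : ℤ → ℤ by Φ_n(z) = z − ((1−x_n) − x_n)·2^{n-1}. Then Φ_n is a graph isomorphism from X_ω to X_{ω'}, i.e. it is a bijection mapping each edge set E_ω^k bijectively onto E_{ω'}^k for every k ≥ 0. -/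
def edgeSet (x : ℕ → ℤ) : ℕ → Set (ℤ × ℤ)
  | 0 => {p | ∃ z : ℤ, p = (z, z + 1)}
  | n + 1 => {p | ∃ z : ℤ,
      p = (2 ^ (n + 1) * z - aseq x (n + 1), 2 ^ (n + 1) * (z + 1) - aseq x (n + 1))}

theorem stmt10 (x y : ℕ → ℤ) (hx : ∀ i, x i = 0 ∨ x i = 1) (n : ℕ) (hn : 1 ≤ n)
    (hyn : y n = 1 - x n) (hy : ∀ i, i ≠ n → y i = x i) :
    Function.Bijective (fun z : ℤ => z - ((1 - x n) - x n) * 2 ^ (n - 1)) ∧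
    ∀ k : ℕ, (fun p : ℤ × ℤ =>
        (p.1 - ((1 - x n) - x n) * 2 ^ (n - 1), p.2 - ((1 - x n) - x n) * 2 ^ (n - 1))) ''
      edgeSet x k = edgeSet y k := by
  set c : ℤ := ((1 - x n) - x n) * 2 ^ (n - 1) with hc
  have hsum : ∀ m : ℕ, aseq y m - aseq x m = if n ≤ m then c else 0 := by
    intro m
    unfold aseq
    have h1 : (∑ i ∈ Finset.range m, y (i + 1) * 2 ^ i) - 2 ^ (m - 1) -
        ((∑ i ∈ Finset.range m, x (i + 1) * 2 ^ i) - 2 ^ (m - 1)) =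
        ∑ i ∈ Finset.range m, (y (i + 1) - x (i + 1)) * 2 ^ i := by
      rw [sub_sub_sub_cancel_right, ← Finset.sum_sub_distrib]
      exact Finset.sum_congr rfl fun i _ => (sub_mul _ _ _).symm
    rw [h1]
    by_cases hnm : n ≤ m
    · rw [if_pos hnm, Finset.sum_eq_single (n - 1)]
      · rw [Nat.sub_add_cancel hn, hyn, hc]
      · intro b hb hbne
        have : b + 1 ≠ n := fun h => hbne (by omega)
        rw [hy _ this]; ring
      · intro h; exact absurd (Finset.mem_range.mpr (by omega)) h
    · rw [if_neg hnm]
      apply Finset.sum_eq_zero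
      intro i hi
      have : i + 1 ≠ n := by simp only [Finset.mem_range] at hi; omega
      rw [hy _ this]; ring
  refine ⟨(Equiv.subRight c).bijective, fun k => ?_⟩
  cases k with
  | zero =>
    ext p
    simp only [edgeSet, Set.mem_image, Set.mem_setOf_eq]
    constructor
    · rintro ⟨q, ⟨z, rfl⟩, rfl⟩
      exact ⟨z - c, by simp [Prod.ext_iff]; ring⟩
    · rintro ⟨z, rfl⟩
      exact ⟨(z + c, z + c + 1), ⟨z + c, rfl⟩, by simp [Prod.ext_iff]; ring⟩
  | succ m =>
    have hdvd : (2 : ℤ) ^ (m + 1) ∣ (aseq y (m + 1) - aseq x (m + 1) - c) := by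
      rw [hsum]
      by_cases hnm : n ≤ m + 1
      · rw [if_pos hnm]; simp
      · rw [if_neg hnm, zero_sub, hc]
        exact dvd_neg.mpr (Dvd.dvd.mul_left (pow_dvd_pow 2 (by omega)) _)
    obtain ⟨d, hd⟩ := hdvd
    ext p
    simp only [edgeSet, Set.mem_image, Set.mem_setOf_eq]
    constructor
    · rintro ⟨q, ⟨z, rfl⟩, rfl⟩
      refine ⟨z + d, ?_⟩
      simp only [Prod.ext_iff]
      constructor <;> linear_combination hd
    · rintro ⟨z, rfl⟩
      refine ⟨(2 ^ (m + 1) * (z - d) - aseq x (m + 1),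
        2 ^ (m + 1) * (z - d + 1) - aseq x (m + 1)), ⟨z - d, rfl⟩, ?_⟩
      simp only [Prod.ext_iff]
      constructor <;> linear_combination hd
end

section
/- If ω and ω' are cofinal binary sequences, then there exists t ∈ ℤ such that translation by t is a graph isomorphism from X_ω to X_{ω'}; explicitly, if ω and ω' differ exactly at indices i₁ < ... < i_k, then t = ∑_{j=1}^k (x_{i_j} − y_{i_j})·2^{i_j − 1} works. -/
theorem stmt12 (x y : ℕ → ℤ) (hx : ∀ i, x i = 0 ∨ x i = 1) (hy : ∀ i, y i = 0 ∨ y i = 1)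
    (i₀ : ℕ) (h : ∀ i, i₀ ≤ i → x i = y i) :
    ∃ t : ℤ, t = (∑ i ∈ Finset.range i₀, (x (i + 1) - y (i + 1)) * 2 ^ i) ∧
      Function.Bijective (fun z : ℤ => z + t) ∧
      ∀ k : ℕ, (fun p : ℤ × ℤ => (p.1 + t, p.2 + t)) '' edgeSet x k = edgeSet y k := by
  set t : ℤ := ∑ i ∈ Finset.range i₀, (x (i + 1) - y (i + 1)) * 2 ^ i with ht
  have key : ∀ n : ℕ, (2:ℤ)^(n+1) ∣ (aseq x (n+1) - t) - aseq y (n+1) := by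
    intro n
    have hD : aseq x (n+1) - aseq y (n+1)
        = ∑ i ∈ Finset.range (n+1), (x (i+1) - y (i+1)) * 2 ^ i := by
      simp only [aseq, Finset.sum_sub_distrib, sub_mul]
      ring
    have hgoal : (aseq x (n+1) - t) - aseq y (n+1)
        = (∑ i ∈ Finset.range (n+1), (x (i+1) - y (i+1)) * 2 ^ i)
          - ∑ i ∈ Finset.range i₀, (x (i+1) - y (i+1)) * 2 ^ i := by
      rw [← hD, ht]; ring
    rw [hgoal]
    rcases le_or_gt i₀ (n+1) with hle | hlt
    · rw [Finset.range_eq_Ico,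
        ← Finset.sum_Ico_consecutive _ (Nat.zero_le i₀) hle, ← Finset.range_eq_Ico, add_sub_cancel_left]
      have hz : ∑ i ∈ Finset.Ico i₀ (n+1), (x (i+1) - y (i+1)) * 2 ^ i = 0 :=
        Finset.sum_eq_zero fun i hi => by
          have := h (i+1) (le_trans (Finset.mem_Ico.mp hi).1 (Nat.le_succ i))
          simp [this]
      rw [hz]; exact dvd_zero _
    · rw [dvd_sub_comm, Finset.range_eq_Ico,
        ← Finset.sum_Ico_consecutive _ (Nat.zero_le (n+1)) hlt.le, ← Finset.range_eq_Ico, add_sub_cancel_left]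
      exact Finset.dvd_sum fun i hi =>
        Dvd.dvd.mul_left (pow_dvd_pow 2 (Finset.mem_Ico.mp hi).1) _
  refine ⟨t, rfl, (Equiv.addRight t).bijective, ?_⟩
  intro k
  cases k with
  | zero =>
    ext p
    simp only [edgeSet, Set.mem_image, Set.mem_setOf_eq]
    constructor
    · rintro ⟨q, ⟨z, rfl⟩, rfl⟩
      exact ⟨z + t, by simp [Prod.ext_iff]; ring⟩
    · rintro ⟨z, rfl⟩
      exact ⟨(z - t, z - t + 1), ⟨z - t, rfl⟩, by simp [Prod.ext_iff]; ring⟩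
  | succ n =>
    obtain ⟨c, hc⟩ := key n
    ext p
    simp only [edgeSet, Set.mem_image, Set.mem_setOf_eq]
    constructor
    · rintro ⟨q, ⟨z, rfl⟩, rfl⟩
      refine ⟨z - c, ?_⟩
      simp only [Prod.ext_iff]
      constructor <;> first | linear_combination hc | linear_combination -hc
    · rintro ⟨z, rfl⟩
      refine ⟨(2 ^ (n+1) * (z + c) - aseq x (n+1),
        2 ^ (n+1) * ((z + c) + 1) - aseq x (n+1)), ⟨z + c, rfl⟩, ?_⟩
      simp only [Prod.ext_iff]
      constructor <;> first | linear_combination hc | linear_combination -hc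
end

section
/- For any binary sequence ω, the arithmetic progressions 2^n ℤ − a_n^ω, for n ≥ 1, are pairwise disjoint subsets of ℤ. -/
lemma aseq_key (x : ℕ → ℤ) (m n : ℕ) (hm : 1 ≤ m) (hlt : m < n) :
    (2:ℤ)^m ∣ (aseq x n - aseq x m - 2^(m-1)) := by
  unfold aseq
  have hsub : ∑ i ∈ Finset.Ico m n, x (i+1) * 2^i
      = ∑ i ∈ Finset.range n, x (i+1) * 2^i - ∑ i ∈ Finset.range m, x (i+1) * 2^i :=
    Finset.sum_Ico_eq_sub _ hlt.le
  have h1 : (2:ℤ)^m ∣ ∑ i ∈ Finset.Ico m n, x (i+1) * 2^i :=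
    Finset.dvd_sum fun i hi =>
      Dvd.dvd.mul_left (pow_dvd_pow (2:ℤ) (Finset.mem_Ico.mp hi).1) _
  have h2 : (2:ℤ)^m ∣ 2^(n-1) := pow_dvd_pow 2 (by omega)
  have : (∑ i ∈ Finset.range n, x (i + 1) * 2 ^ i - 2 ^ (n - 1))
      - (∑ i ∈ Finset.range m, x (i + 1) * 2 ^ i - 2 ^ (m - 1)) - 2^(m-1)
      = ∑ i ∈ Finset.Ico m n, x (i+1) * 2^i - 2^(n-1) := by
    rw [hsub]; ring
  rw [this]
  exact dvd_sub h1 h2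

lemma notboth (x : ℕ → ℤ) (m n : ℕ) (hm : 1 ≤ m) (hlt : m < n) (w : ℤ)
    (h1 : ∃ z : ℤ, w = 2 ^ m * z - aseq x m)
    (h2 : ∃ z : ℤ, w = 2 ^ n * z - aseq x n) : False := by
  obtain ⟨z1, hz1⟩ := h1
  obtain ⟨z2, hz2⟩ := h2
  have hdvd : (2:ℤ)^m ∣ (aseq x n - aseq x m) := by
    have : aseq x n - aseq x m = 2^n * z2 - 2^m * z1 := by
      have := hz1.symm.trans hz2; linarith
    rw [this]
    exact dvd_sub (Dvd.dvd.mul_right (pow_dvd_pow 2 hlt.le) _) (Dvd.dvd.mul_right dvd_rfl _)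
  have hkey := aseq_key x m n hm hlt
  have h3 : (2:ℤ)^m ∣ 2^(m-1) := by
    have := dvd_sub hdvd hkey
    simpa using this
  have hle : (2:ℤ)^m ≤ 2^(m-1) := Int.le_of_dvd (by positivity) h3
  have : (2:ℤ)^(m-1) < 2^m := by
    apply pow_lt_pow_right₀ (by norm_num) (by omega)
  linarith

theorem stmt15 (x : ℕ → ℤ) (hx : ∀ i, x i = 0 ∨ x i = 1)
    (m n : ℕ) (hm : 1 ≤ m) (hn : 1 ≤ n) (hmn : m ≠ n) :
    {w : ℤ | ∃ z : ℤ, w = 2 ^ m * z - aseq x m} ∩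
      {w : ℤ | ∃ z : ℤ, w = 2 ^ n * z - aseq x n} = ∅ := by
  ext w
  simp only [Set.mem_inter_iff, Set.mem_setOf_eq, Set.mem_empty_iff_false, iff_false, not_and]
  intro h1 h2
  rcases lt_or_gt_of_ne hmn with h | h
  · exact notboth x m n hm h w h1 h2
  · exact notboth x n m hn h w h2 h1
end

section
/- In the graph X_ω for any binary sequence ω, every vertex z ∈ ℤ is incident to exactly two edges of E_ω^0, and to at most two edges of ⋃_{n≥1} E_ω^n; a vertex z is incident to exactly two edges of E_ω^n for some unique n ≥ 1 iff z ≡ −a_n^ω (mod 2^n). In particular every vertex has degree at most 4. -/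
def inc (x : ℕ → ℤ) (k : ℕ) (z : ℤ) : Set (ℤ × ℤ) :=
  {e ∈ edgeSet x k | z = e.1 ∨ z = e.2}

lemma mem_inc_succ {x : ℕ → ℤ} {n : ℕ} {z : ℤ} {e : ℤ × ℤ} :
    e ∈ inc x (n+1) z ↔ (∃ w : ℤ,
      e = (2^(n+1)*w - aseq x (n+1), 2^(n+1)*(w+1) - aseq x (n+1))) ∧ (z = e.1 ∨ z = e.2) := by
  simp [inc, edgeSet, Set.mem_setOf_eq]

lemma aseq_not_dvd (x : ℕ → ℤ) (n m : ℕ) (hn : 1 ≤ n) (hnm : n < m) :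
    ¬ (2:ℤ)^n ∣ (aseq x m - aseq x n) := by
  intro hdvd
  have hsum : aseq x m - aseq x n
      = (∑ i ∈ Finset.Ico n m, x (i+1) * 2^i) - 2^(m-1) + 2^(n-1) := by
    unfold aseq
    rw [Finset.sum_Ico_eq_sub _ hnm.le]
    ring
  have h1 : (2:ℤ)^n ∣ ∑ i ∈ Finset.Ico n m, x (i+1) * 2^i :=
    Finset.dvd_sum (fun i hi => Dvd.dvd.mul_left (pow_dvd_pow 2 (Finset.mem_Ico.mp hi).1) _)
  have h2 : (2:ℤ)^n ∣ 2^(m-1) := pow_dvd_pow 2 (by omega)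
  have h3 : (2:ℤ)^n ∣ 2^(n-1) := by
    have h4 : (2:ℤ)^(n-1) = (aseq x m - aseq x n) -
        (∑ i ∈ Finset.Ico n m, x (i+1) * 2^i) + 2^(m-1) := by rw [hsum]; ring
    rw [h4]
    exact dvd_add (dvd_sub hdvd h1) h2
  have h5 : (2:ℤ)^n ≤ 2^(n-1) := Int.le_of_dvd (by positivity) h3
  have h6 : (2:ℤ)^(n-1) < 2^n := by
    apply pow_lt_pow_right₀ (by norm_num) (by omega)
  linarith

lemma inc_zero_eq (x : ℕ → ℤ) (z : ℤ) :
    inc x 0 z = {(z, z+1), (z-1, z)} := by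
  ext e
  simp only [inc, edgeSet, Set.mem_setOf_eq, Set.mem_insert_iff, Set.mem_singleton_iff]
  constructor
  · rintro ⟨⟨w, rfl⟩, h | h⟩
    · left; simp at h; subst h; rfl
    · right; simp at h; subst h; simp
  · rintro (rfl | rfl)
    · exact ⟨⟨z, rfl⟩, Or.inl rfl⟩
    · exact ⟨⟨z - 1, by simp⟩, Or.inr rfl⟩

lemma inc_succ_subset (x : ℕ → ℤ) (n : ℕ) (z : ℤ) :
    inc x (n+1) z ⊆ {(z, z + 2^(n+1)), (z - 2^(n+1), z)} := by
  intro e he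
  rw [mem_inc_succ] at he
  obtain ⟨⟨w, rfl⟩, h | h⟩ := he
  · left; simp only at h; subst h
    rw [Prod.ext_iff]
    exact ⟨rfl, by ring⟩
  · right; simp only at h; subst h
    rw [Set.mem_singleton_iff, Prod.ext_iff]
    exact ⟨by ring, rfl⟩

lemma inc_succ_eq (x : ℕ → ℤ) (n : ℕ) (z w0 : ℤ)
    (hz : z = 2^(n+1) * w0 - aseq x (n+1)) :
    inc x (n+1) z = {(z, z + 2^(n+1)), (z - 2^(n+1), z)} := by
  refine subset_antisymm (inc_succ_subset x n z) ?_
  rintro e (rfl | rfl)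
  · rw [mem_inc_succ]
    exact ⟨⟨w0, by rw [hz]; rw [Prod.ext_iff]; constructor <;> ring⟩, Or.inl rfl⟩
  · rw [mem_inc_succ]
    exact ⟨⟨w0 - 1, by rw [hz]; simp only [Prod.mk.injEq]; constructor <;> ring⟩, Or.inr rfl⟩

lemma inc_succ_empty (x : ℕ → ℤ) (n : ℕ) (z : ℤ)
    (hz : ¬ ∃ w : ℤ, z = 2^(n+1) * w - aseq x (n+1)) :
    inc x (n+1) z = ∅ := by
  ext e
  simp only [Set.mem_empty_iff_false, iff_false]
  intro he
  rw [mem_inc_succ] at he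
  obtain ⟨⟨w, rfl⟩, h | h⟩ := he
  · exact hz ⟨w, h⟩
  · exact hz ⟨w + 1, h⟩

lemma inc_succ_ncard (x : ℕ → ℤ) (n : ℕ) (z w0 : ℤ)
    (hz : z = 2^(n+1) * w0 - aseq x (n+1)) :
    (inc x (n+1) z).ncard = 2 := by
  rw [inc_succ_eq x n z w0 hz]
  apply Set.ncard_pair
  intro h
  have := congrArg Prod.fst h
  simp only at this
  have hp : (0:ℤ) < 2^(n+1) := by positivity
  omega

lemma inc_finite (x : ℕ → ℤ) (k : ℕ) (z : ℤ) : (inc x k z).Finite := by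
  cases k with
  | zero => rw [inc_zero_eq]; exact (Set.finite_singleton _).insert _
  | succ n => exact ((Set.finite_singleton _).insert _).subset (inc_succ_subset x n z)

lemma inc_pos_ncard_iff (x : ℕ → ℤ) (n : ℕ) (hn : 1 ≤ n) (z : ℤ) :
    (inc x n z).ncard = 2 ↔ ∃ w : ℤ, z = 2 ^ n * w - aseq x n := by
  obtain ⟨k, rfl⟩ : ∃ k, n = k + 1 := ⟨n - 1, by omega⟩
  constructor
  · intro hcard
    by_contra hno
    rw [inc_succ_empty x k z hno] at hcard
    simp at hcard
  · rintro ⟨w, hw⟩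
    exact inc_succ_ncard x k z w hw

lemma uniq_n (x : ℕ → ℤ) (z : ℤ) (n m : ℕ) (hn : 1 ≤ n) (hm : 1 ≤ m)
    (w v : ℤ) (hw : z = 2 ^ n * w - aseq x n) (hv : z = 2 ^ m * v - aseq x m) :
    n = m := by
  by_contra hne
  rcases Nat.lt_or_ge n m with h | h
  · apply aseq_not_dvd x n m hn h
    have : aseq x m - aseq x n = 2 ^ m * v - 2 ^ n * w := by omega
    rw [this]
    exact dvd_sub (Dvd.dvd.mul_right (pow_dvd_pow 2 h.le) v) (Dvd.dvd.mul_right dvd_rfl w)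
  · have h' : m < n := by omega
    apply aseq_not_dvd x m n hm h'
    have : aseq x n - aseq x m = 2 ^ n * w - 2 ^ m * v := by omega
    rw [this]
    exact dvd_sub (Dvd.dvd.mul_right (pow_dvd_pow 2 h'.le) w) (Dvd.dvd.mul_right dvd_rfl v)

lemma inc_nonempty_exists (x : ℕ → ℤ) (k : ℕ) (z : ℤ) (h : (inc x (k+1) z).Nonempty) :
    ∃ w : ℤ, z = 2 ^ (k+1) * w - aseq x (k+1) := by
  by_contra hno
  rw [inc_succ_empty x k z hno] at h
  exact Set.not_nonempty_empty h

lemma union_le_two (x : ℕ → ℤ) (z : ℤ) :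
    (⋃ n ∈ {n : ℕ | 1 ≤ n}, inc x n z).ncard ≤ 2 := by
  by_cases h : ∃ n : ℕ, 1 ≤ n ∧ (inc x n z).Nonempty
  · obtain ⟨n, hn, hne⟩ := h
    obtain ⟨k, rfl⟩ : ∃ k, n = k + 1 := ⟨n - 1, by omega⟩
    obtain ⟨w, hw⟩ := inc_nonempty_exists x k z hne
    have hsub : (⋃ n ∈ {n : ℕ | 1 ≤ n}, inc x n z) ⊆ inc x (k+1) z := by
      intro e he
      simp only [Set.mem_iUnion, Set.mem_setOf_eq] at he
      obtain ⟨m, hm, hem⟩ := he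
      obtain ⟨j, rfl⟩ : ∃ j, m = j + 1 := ⟨m - 1, by omega⟩
      obtain ⟨v, hv⟩ := inc_nonempty_exists x j z ⟨e, hem⟩
      have : j + 1 = k + 1 := uniq_n x z (j+1) (k+1) (by omega) (by omega) v w hv hw
      rwa [this] at hem
    calc (⋃ n ∈ {n : ℕ | 1 ≤ n}, inc x n z).ncard
        ≤ (inc x (k+1) z).ncard := Set.ncard_le_ncard hsub (inc_finite x (k+1) z)
      _ = 2 := inc_succ_ncard x k z w hw
  · push_neg at h
    have : (⋃ n ∈ {n : ℕ | 1 ≤ n}, inc x n z) = ∅ := by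
      simp only [Set.eq_empty_iff_forall_notMem, Set.mem_iUnion, Set.mem_setOf_eq]
      rintro e ⟨m, hm, hem⟩
      exact Set.not_nonempty_iff_eq_empty.mpr (h m hm) ⟨e, hem⟩
    rw [this]; simp

theorem stmt16 (x : ℕ → ℤ) (hx : ∀ i, x i = 0 ∨ x i = 1) :
    (∀ z : ℤ, (inc x 0 z).ncard = 2) ∧
    (∀ z : ℤ, (⋃ n ∈ {n : ℕ | 1 ≤ n}, inc x n z).ncard ≤ 2) ∧
    (∀ z : ℤ, ∀ n : ℕ, 1 ≤ n →
      ((inc x n z).ncard = 2 ↔ ∃ w : ℤ, z = 2 ^ n * w - aseq x n)) ∧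
    (∀ z : ℤ, ∀ n m : ℕ, 1 ≤ n → 1 ≤ m →
      (inc x n z).ncard = 2 → (inc x m z).ncard = 2 → n = m) ∧
    (∀ z : ℤ, (⋃ k : ℕ, inc x k z).ncard ≤ 4) := by
  have h0 : ∀ z : ℤ, (inc x 0 z).ncard = 2 := by
    intro z
    rw [inc_zero_eq]
    apply Set.ncard_pair
    intro h
    have := congrArg Prod.fst h
    simp at this; omega
  refine ⟨h0, fun z => union_le_two x z, fun z n hn => inc_pos_ncard_iff x n hn z, ?_, ?_⟩
  · intro z n m hn hm hcn hcm
    obtain ⟨w, hw⟩ := (inc_pos_ncard_iff x n hn z).mp hcn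
    obtain ⟨v, hv⟩ := (inc_pos_ncard_iff x m hm z).mp hcm
    exact uniq_n x z n m hn hm w v hw hv
  · intro z
    have hsub : (⋃ k : ℕ, inc x k z) ⊆ inc x 0 z ∪ (⋃ n ∈ {n : ℕ | 1 ≤ n}, inc x n z) := by
      intro e he
      simp only [Set.mem_iUnion] at he
      obtain ⟨k, hk⟩ := he
      cases k with
      | zero => exact Or.inl hk
      | succ j =>
        right
        simp only [Set.mem_iUnion, Set.mem_setOf_eq]
        exact ⟨j + 1, by omega, hk⟩
    have hUfin : (⋃ n ∈ {n : ℕ | 1 ≤ n}, inc x n z).Finite := by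
      by_cases h : ∃ n : ℕ, 1 ≤ n ∧ (inc x n z).Nonempty
      · obtain ⟨n, hn, hne⟩ := h
        obtain ⟨k, rfl⟩ : ∃ k, n = k + 1 := ⟨n - 1, by omega⟩
        obtain ⟨w, hw⟩ := inc_nonempty_exists x k z hne
        apply (inc_finite x (k+1) z).subset
        intro e he
        simp only [Set.mem_iUnion, Set.mem_setOf_eq] at he
        obtain ⟨m, hm, hem⟩ := he
        obtain ⟨j, rfl⟩ : ∃ j, m = j + 1 := ⟨m - 1, by omega⟩
        obtain ⟨v, hv⟩ := inc_nonempty_exists x j z ⟨e, hem⟩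
        have : j + 1 = k + 1 := uniq_n x z (j+1) (k+1) (by omega) (by omega) v w hv hw
        rwa [this] at hem
      · push_neg at h
        have : (⋃ n ∈ {n : ℕ | 1 ≤ n}, inc x n z) = ∅ := by
          simp only [Set.eq_empty_iff_forall_notMem, Set.mem_iUnion, Set.mem_setOf_eq]
          rintro e ⟨m, hm, hem⟩
          exact Set.not_nonempty_iff_eq_empty.mpr (h m hm) ⟨e, hem⟩
        rw [this]; exact Set.finite_empty
    calc (⋃ k : ℕ, inc x k z).ncard
        ≤ (inc x 0 z ∪ (⋃ n ∈ {n : ℕ | 1 ≤ n}, inc x n z)).ncard :=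
          Set.ncard_le_ncard hsub ((inc_finite x 0 z).union hUfin)
      _ ≤ (inc x 0 z).ncard + (⋃ n ∈ {n : ℕ | 1 ≤ n}, inc x n z).ncard :=
          Set.ncard_union_le _ _
      _ ≤ 2 + 2 := by
          have := h0 z
          have := union_le_two x z
          omega
      _ = 4 := rfl
end

section
/- If a binary sequence ω contains infinitely many 0's and infinitely many 1's, then every integer z belongs to 2^n ℤ − a_n^ω for some n ≥ 1 (equivalently, every vertex of X_ω has degree exactly 4). -/
theorem stmt17 (x : ℕ → ℤ) (hx : ∀ i, x i = 0 ∨ x i = 1)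
    (h0 : {i : ℕ | x i = 0}.Infinite) (h1 : {i : ℕ | x i = 1}.Infinite) :
    ∀ z : ℤ, ∃ n : ℕ, 1 ≤ n ∧ ∃ w : ℤ, z = 2 ^ n * w - aseq x n := by
  intro z
  by_contra hc
  push_neg at hc
  have hnd : ∀ n, 1 ≤ n → ¬ ((2:ℤ)^n ∣ z + aseq x n) := by
    intro n hn hd
    obtain ⟨w, hw⟩ := hd
    exact hc n hn w (by linarith)
  set S : ℕ → ℤ := fun n => ∑ i ∈ Finset.range n, x (i+1) * 2^i with hSdef
  have hAS : ∀ n, aseq x n = S n - 2^(n-1) := fun n => rfl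
  have hSsucc : ∀ n, S (n+1) = S n + x (n+1) * 2^n := by
    intro n; simp [hSdef, Finset.sum_range_succ]
  have hdvd : ∀ n, 1 ≤ n → (2:ℤ)^n ∣ z + S n := by
    intro n hn
    induction n with
    | zero => omega
    | succ m ih =>
      rcases Nat.eq_zero_or_pos m with hm | hm
      · subst hm
        have h1' := hnd 1 le_rfl
        have e1 : aseq x 1 = x 1 - 1 := by simp [hAS, hSdef]
        rw [e1] at h1'
        have e2 : S 1 = x 1 := by simp [hSdef]
        rw [e2]
        simp only [pow_one] at h1' ⊢
        omega
      · obtain ⟨q, hq⟩ := ih hm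
        have hnd' := hnd (m+1) (by omega)
        have hA : aseq x (m+1) = S (m+1) - 2^m := hAS (m+1)
        rw [hA] at hnd'
        have h2 : ¬ ((2:ℤ) ∣ (q + x (m+1) - 1)) := by
          rintro ⟨t, ht⟩
          apply hnd'
          refine ⟨t, ?_⟩
          rw [hSsucc]
          linear_combination hq + (2:ℤ)^m * ht
        have h3 : (2:ℤ) ∣ (q + x (m+1)) := by omega
        obtain ⟨t, ht⟩ := h3
        refine ⟨t, ?_⟩
        rw [hSsucc]
        linear_combination hq + (2:ℤ)^m * ht
  set Q : ℕ → ℤ := fun n => (z + S n) / 2^n with hQdef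
  have hq : ∀ n, 1 ≤ n → (2:ℤ)^n * Q n = z + S n := fun n hn =>
    Int.mul_ediv_cancel' (hdvd n hn)
  have hrec : ∀ n, 1 ≤ n → 2 * Q (n+1) = Q n + x (n+1) := by
    intro n hn
    have a := hq n hn
    have b := hq (n+1) (by omega)
    rw [hSsucc] at b
    have key : (2:ℤ)^n * (2 * Q (n+1)) = 2^n * (Q n + x (n+1)) := by
      linear_combination b - a
    exact mul_left_cancel₀ (by positivity) key
  have step : ∀ n, 1 ≤ n → Q n ≠ 0 → Q n ≠ 1 → (Q (n+1)).natAbs < (Q n).natAbs := by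
    intro n hn hz ho
    have hr := hrec n hn
    rcases hx (n+1) with h | h <;> rw [h] at hr <;> omega
  have exN : ∃ N, 1 ≤ N ∧ (Q N = 0 ∨ Q N = 1) := by
    by_contra hN
    push_neg at hN
    have h' : ∀ k, (Q (1+k)).natAbs + k ≤ (Q 1).natAbs := by
      intro k
      induction k with
      | zero => simp
      | succ m ih =>
        have hnm : 1 ≤ 1 + m := by omega
        have hs := step (1+m) hnm (hN (1+m) hnm).1 (hN (1+m) hnm).2
        have e : 1 + (m+1) = (1+m) + 1 := by omega
        rw [e]
        omega
    have := h' ((Q 1).natAbs + 1)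
    omega
  obtain ⟨N, hN1, hN2⟩ := exN
  rcases hN2 with hQ0 | hQ1
  · -- Q N = 0 : eventually all digits are 0, contradicting h1
    have hall : ∀ k, Q (N+k) = 0 := by
      intro k
      induction k with
      | zero => simpa using hQ0
      | succ m ih =>
        have hr := hrec (N+m) (by omega)
        rw [ih] at hr
        show Q (N+m+1) = 0
        rcases hx (N+m+1) with h | h <;> rw [h] at hr <;> omega
    have hx0 : ∀ k, x (N+k+1) = 0 := by
      intro k
      have hr := hrec (N+k) (by omega)
      rw [hall k] at hr
      have h2 := hall (k+1)
      have e : N + (k+1) = N + k + 1 := by omega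
      rw [e] at h2
      rw [h2] at hr
      omega
    have hsub : {i : ℕ | x i = 1} ⊆ Set.Iic N := by
      intro i hi
      by_contra hgt
      simp only [Set.mem_Iic, not_le] at hgt
      have : x (N + (i - N - 1) + 1) = 0 := hx0 (i - N - 1)
      have e : N + (i - N - 1) + 1 = i := by omega
      rw [e] at this
      simp only [Set.mem_setOf_eq] at hi
      omega
    exact ((Set.finite_Iic N).subset hsub).not_infinite h1
  · -- Q N = 1 : eventually all digits are 1, contradicting h0
    have hall : ∀ k, Q (N+k) = 1 := by
      intro k
      induction k with
      | zero => simpa using hQ1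
      | succ m ih =>
        have hr := hrec (N+m) (by omega)
        rw [ih] at hr
        show Q (N+m+1) = 1
        rcases hx (N+m+1) with h | h <;> rw [h] at hr <;> omega
    have hx1 : ∀ k, x (N+k+1) = 1 := by
      intro k
      have hr := hrec (N+k) (by omega)
      rw [hall k] at hr
      have h2 := hall (k+1)
      have e : N + (k+1) = N + k + 1 := by omega
      rw [e] at h2
      rw [h2] at hr
      omega
    have hsub : {i : ℕ | x i = 0} ⊆ Set.Iic N := by
      intro i hi
      by_contra hgt
      simp only [Set.mem_Iic, not_le] at hgt
      have : x (N + (i - N - 1) + 1) = 1 := hx1 (i - N - 1)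
      have e : N + (i - N - 1) + 1 = i := by omega
      rw [e] at this
      simp only [Set.mem_setOf_eq] at hi
      omega
    exact ((Set.finite_Iic N).subset hsub).not_infinite h0
end
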